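/- Let A be a synchronizing n-state automaton (n ≥ 2) with sink state s, let M' be the set of adjacency matrices of its letters, and let M = { M' + e_sᵀe : M' ∈ M' } (each matrix of M' with its s-th row replaced by all ones). Then every matrix in M has no zero rows and no zero columns, the set M is primitive, and exp(M) = rt(A) + 1, where rt(A) is the length of the shortest synchronizing word of A. -/

import Mathlib

/-- Boolean matrix product: `(A * B)[i,j] = 1` iff `∃ k, A[i,k] = B[k,j] = 1`. -/
def bmul {n : ℕ} (A B : Matrix (Fin n) (Fin n) Bool) : Matrix (Fin n) (Fin n) Bool :=
  fun i j => decide (∃ k, A i k = true ∧ B k j = true)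

/-- Boolean identity matrix. -/
def bid (n : ℕ) : Matrix (Fin n) (Fin n) Bool := fun i j => decide (i = j)

/-- Product of a list of Boolean matrices. -/
def bprod {n : ℕ} (L : List (Matrix (Fin n) (Fin n) Bool)) : Matrix (Fin n) (Fin n) Bool :=
  L.foldr bmul (bid n)

/-- A Boolean matrix is (entrywise) positive if all its entries are 1. -/
def bpos {n : ℕ} (A : Matrix (Fin n) (Fin n) Bool) : Prop := ∀ i j, A i j = true

/-- A set of Boolean matrices is primitive if some nonempty product of its elements
is entrywise positive. -/
def Primitive {n : ℕ} (M : Set (Matrix (Fin n) (Fin n) Bool)) : Prop :=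
  ∃ L : List (Matrix (Fin n) (Fin n) Bool),
    L ≠ [] ∧ (∀ A ∈ L, A ∈ M) ∧ bpos (bprod L)

/-- The exponent of a primitive set: the length of the shortest positive product. -/
noncomputable def expSet {n : ℕ} (M : Set (Matrix (Fin n) (Fin n) Bool)) : ℕ :=
  sInf {m | ∃ L : List (Matrix (Fin n) (Fin n) Bool),
    L.length = m ∧ L ≠ [] ∧ (∀ A ∈ L, A ∈ M) ∧ bpos (bprod L)}

/-- The action of a word on a state of a DFA. -/
def actWord {Q σ : Type*} (δ : Q → σ → Q) (q : Q) (w : List σ) : Q :=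
  w.foldl δ q

/-- Reset threshold: length of a shortest synchronizing word. -/
noncomputable def rt {Q σ : Type*} (δ : Q → σ → Q) : ℕ :=
  sInf {m | ∃ (w : List σ) (f : Q), w.length = m ∧ ∀ q, actWord δ q w = f}

/-- Adjacency matrix of a letter, with the `s`-th row made all ones. -/
def augAdj {n : ℕ} {σ : Type*} (δ : Fin n → σ → Fin n) (s : Fin n) (a : σ) :
    Matrix (Fin n) (Fin n) Bool :=
  fun i j => decide (δ i a = j ∨ i = s)

section Aux
variable {n : ℕ} {σ : Type*} (δ : Fin n → σ → Fin n) (s : Fin n)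

lemma actWord_nil {Q σ : Type*} (δ : Q → σ → Q) (q : Q) : actWord δ q [] = q := rfl

lemma actWord_cons {Q σ : Type*} (δ : Q → σ → Q) (q : Q) (a : σ) (w : List σ) :
    actWord δ q (a :: w) = actWord δ (δ q a) w := rfl

lemma sink_actWord (hsink : ∀ a, δ s a = s) : ∀ w : List σ, actWord δ s w = s := by
  intro w
  induction w with
  | nil => rfl
  | cons a v ih => rw [actWord_cons, hsink]; exact ih

lemma bprod_cons (A : Matrix (Fin n) (Fin n) Bool) (L : List (Matrix (Fin n) (Fin n) Bool)) :
    bprod (A :: L) = bmul A (bprod L) := rfl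

lemma augAdj_iff (a : σ) (i j : Fin n) :
    augAdj δ s a i j = true ↔ (δ i a = j ∨ i = s) := by
  simp [augAdj]

lemma bmul_iff (A B : Matrix (Fin n) (Fin n) Bool) (i j : Fin n) :
    bmul A B i j = true ↔ ∃ k, A i k = true ∧ B k j = true := by
  simp [bmul]

lemma bid_iff (i j : Fin n) : bid n i j = true ↔ i = j := by simp [bid]

lemma row_pos (w : List σ) (i : Fin n) (hne : w ≠ [])
    (hres : actWord δ i w.dropLast = s) :
    ∀ j, bprod (w.map (augAdj δ s)) i j = true := by
  induction w generalizing i with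
  | nil => exact absurd rfl hne
  | cons a v ih =>
    intro j
    rw [List.map_cons, bprod_cons, bmul_iff]
    cases v with
    | nil =>
      refine ⟨j, ?_, ?_⟩
      · rw [augAdj_iff]
        right
        simpa [actWord_nil] using hres
      · simp [bprod, bid_iff]
    | cons b v' =>
      refine ⟨δ i a, ?_, ?_⟩
      · rw [augAdj_iff]; left; rfl
      · refine ih (δ i a) (by simp) ?_ j
        have : (a :: b :: v').dropLast = a :: (b :: v').dropLast := rfl
        rw [this, actWord_cons] at hres
        exact hres

lemma entry_charac (hsink : ∀ a, δ s a = s) (w : List σ) (i j : Fin n)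
    (h : bprod (w.map (augAdj δ s)) i j = true) :
    actWord δ i w = j ∨ (w ≠ [] ∧ actWord δ i w.dropLast = s) := by
  induction w generalizing i with
  | nil =>
    left
    simpa [bprod, bid_iff, actWord_nil] using h
  | cons a v ih =>
    rw [List.map_cons, bprod_cons, bmul_iff] at h
    obtain ⟨k, hk1, hk2⟩ := h
    rw [augAdj_iff] at hk1
    rcases hk1 with hk1 | hi
    · rcases ih k hk2 with h1 | ⟨hv, h2⟩
      · left; rw [actWord_cons, hk1]; exact h1
      · right
        refine ⟨by simp, ?_⟩
        cases v with
        | nil => exact absurd rfl hv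
        | cons b v' =>
          have : (a :: b :: v').dropLast = a :: (b :: v').dropLast := rfl
          rw [this, actWord_cons, hk1]
          exact h2
    · right
      refine ⟨by simp, ?_⟩
      rw [hi]
      exact sink_actWord δ s hsink _

lemma exists_word (L : List (Matrix (Fin n) (Fin n) Bool))
    (h : ∀ A ∈ L, ∃ a : σ, A = augAdj δ s a) :
    ∃ w : List σ, L = w.map (augAdj δ s) := by
  induction L with
  | nil => exact ⟨[], rfl⟩
  | cons A L' ih =>
    obtain ⟨a, ha⟩ := h A (by simp)
    obtain ⟨w', hw'⟩ := ih (fun B hB => h B (by simp [hB]))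
    exact ⟨a :: w', by rw [List.map_cons, ← ha, ← hw']⟩

end Aux

theorem sink_automaton_exponent {n : ℕ} {σ : Type*}
    (hn : 2 ≤ n) (δ : Fin n → σ → Fin n) (s : Fin n)
    (hsink : ∀ a, δ s a = s)
    (hsync : ∃ (w : List σ) (f : Fin n), ∀ q, actWord δ q w = f) :
    (∀ a : σ, (∀ i, ∃ j, augAdj δ s a i j = true) ∧ (∀ j, ∃ i, augAdj δ s a i j = true)) ∧
      Primitive {A | ∃ a : σ, A = augAdj δ s a} ∧
      expSet {A | ∃ a : σ, A = augAdj δ s a} = rt δ + 1 := by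
  classical
  haveI : NeZero n := ⟨by omega⟩
  obtain ⟨w0, f0, hw0⟩ := hsync
  have hw0ne : w0 ≠ [] := by
    intro h
    subst h
    have h1 := hw0 ⟨0, by omega⟩
    have h2 := hw0 ⟨1, by omega⟩
    rw [actWord_nil] at h1 h2
    rw [← h2] at h1
    exact absurd (congrArg Fin.val h1) (by simp)
  set a₀ : σ := w0.head hw0ne with ha₀
  -- the reset threshold set
  set R : Set ℕ := {m | ∃ (w : List σ) (f : Fin n), w.length = m ∧ ∀ q, actWord δ q w = f}
    with hR
  have hRne : R.Nonempty := ⟨w0.length, w0, f0, rfl, hw0⟩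
  obtain ⟨wr, fr, hlenr, hwr⟩ := Nat.sInf_mem hRne
  have hfr : fr = s := by
    have := hwr s
    rw [sink_actWord δ s hsink] at this
    exact this.symm
  have hreset : ∀ q, actWord δ q wr = s := by
    intro q; rw [hwr q, hfr]
  -- the witness list
  set Lw : List (Matrix (Fin n) (Fin n) Bool) := (wr ++ [a₀]).map (augAdj δ s) with hLw
  have hLwne : Lw ≠ [] := by simp [hLw]
  have hLwmem : ∀ A ∈ Lw, A ∈ {A | ∃ a : σ, A = augAdj δ s a} := by
    intro A hA
    rw [hLw, List.mem_map] at hA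
    obtain ⟨a, _, ha⟩ := hA
    exact ⟨a, ha.symm⟩
  have hLwpos : bpos (bprod Lw) := by
    intro i j
    refine row_pos δ s (wr ++ [a₀]) i (by simp) ?_ j
    rw [List.dropLast_concat]
    exact hreset i
  have hLwlen : Lw.length = sInf R + 1 := by
    simp [hLw, hlenr]
  -- the exponent set
  set E : Set ℕ := {m | ∃ L : List (Matrix (Fin n) (Fin n) Bool),
    L.length = m ∧ L ≠ [] ∧ (∀ A ∈ L, A ∈ {A | ∃ a : σ, A = augAdj δ s a}) ∧ bpos (bprod L)}
    with hE
  have hEne : E.Nonempty := ⟨sInf R + 1, Lw, hLwlen, hLwne, hLwmem, hLwpos⟩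
  have hle : sInf E ≤ sInf R + 1 := Nat.sInf_le ⟨Lw, hLwlen, hLwne, hLwmem, hLwpos⟩
  have hge : sInf R + 1 ≤ sInf E := by
    obtain ⟨L, hlen, hLne, hmem, hpos⟩ := Nat.sInf_mem hEne
    obtain ⟨w, hw⟩ := exists_word δ s L hmem
    have hwne : w ≠ [] := by
      intro h; rw [h] at hw; simp at hw; exact hLne hw
    have hres : ∀ i, actWord δ i w.dropLast = s := by
      intro i
      have j1 : Fin n := ⟨0, by omega⟩
      have c1 := entry_charac δ s hsink w i ⟨0, by omega⟩ (by rw [← hw]; exact hpos i _)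
      have c2 := entry_charac δ s hsink w i ⟨1, by omega⟩ (by rw [← hw]; exact hpos i _)
      rcases c1 with c1 | ⟨_, c1⟩
      · rcases c2 with c2 | ⟨_, c2⟩
        · rw [c2] at c1
          exact absurd (congrArg Fin.val c1) (by simp)
        · exact c2
      · exact c1
    have hmemR : w.dropLast.length ∈ R := ⟨w.dropLast, s, rfl, hres⟩
    have h1 : sInf R ≤ w.dropLast.length := Nat.sInf_le hmemR
    have h2 : w.dropLast.length = w.length - 1 := List.length_dropLast
    have h3 : w.length = sInf E := by rw [← hlen, hw, List.length_map]
    have h4 : 1 ≤ w.length := List.length_pos_iff.mpr hwne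
    omega
  refine ⟨fun a => ⟨fun i => ⟨δ i a, by rw [augAdj_iff]; left; rfl⟩,
    fun j => ⟨s, by rw [augAdj_iff]; right; rfl⟩⟩,
    ⟨Lw, hLwne, hLwmem, hLwpos⟩, ?_⟩
  have : expSet {A | ∃ a : σ, A = augAdj δ s a} = sInf E := rfl
  have hrt : rt δ = sInf R := rfl
  rw [this, hrt]
  omega
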